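/- For the GFBST with cutoff c < 0.5: if H is accepted (ev(Θ∖H|x) ≤ c), then P(H|x) ≥ 1−c, hence P(H|x) > c, and hence H is possible under the GFBST (ev(H|x) > c). -/
import Mathlib


open MeasureTheory

def tangentSet {Θ : Type*} (s : Θ → ℝ) (H : Set Θ) : Set Θ :=
  {θ₁ | ∀ θ₀ ∈ H, s θ₁ > s θ₀}

noncomputable def ev {Θ : Type*} [MeasurableSpace Θ] (P : Measure Θ) (s : Θ → ℝ)
    (H : Set Θ) : ENNReal :=
  1 - P (tangentSet s H)

lemma tangent_subset_compl {Θ : Type*} (s : Θ → ℝ) (H : Set Θ) :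
    tangentSet s H ⊆ Hᶜ := fun θ hθ hmem => lt_irrefl _ (hθ θ hmem)

theorem stmt_10 {Θ : Type*} [MeasurableSpace Θ] (P : Measure Θ) [IsProbabilityMeasure P]
    (s : Θ → ℝ) (c : ENNReal) (hc0 : 0 < c) (hc : c < 1/2)
    (H : Set Θ) (hacc : ev P s Hᶜ ≤ c) :
    P H ≥ 1 - c ∧ P H > c ∧ ev P s H > c := by
  have hsub : tangentSet s Hᶜ ⊆ H := by
    simpa using tangent_subset_compl s Hᶜ
  have hc1 : c < 1 := hc.trans (by norm_num)
  -- from hacc: 1 - c ≤ P (tangentSet s Hᶜ)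
  have hT : 1 - c ≤ P (tangentSet s Hᶜ) := by
    unfold ev at hacc
    calc 1 - c ≤ 1 - (1 - P (tangentSet s Hᶜ)) := tsub_le_tsub_left hacc 1
      _ = P (tangentSet s Hᶜ) := ENNReal.sub_sub_cancel (by norm_num) prob_le_one
  have hPH : P H ≥ 1 - c := le_trans hT (measure_mono hsub)
  have hclt : c < 1 - c := by
    have h2 : c + c < 1 := by
      calc c + c < 1/2 + 1/2 := ENNReal.add_lt_add hc hc
        _ = 1 := ENNReal.add_halves 1
    exact lt_tsub_iff_right.mpr h2
  have hPHc : P H > c := lt_of_lt_of_le hclt hPH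
  refine ⟨hPH, hPHc, ?_⟩
  -- tangentSet s Hᶜ is nonempty since its measure is positive
  have hpos : 0 < P (tangentSet s Hᶜ) := lt_of_le_of_lt hc0.le (lt_of_lt_of_le hclt hT)
  obtain ⟨θ₂, hθ₂⟩ := MeasureTheory.nonempty_of_measure_ne_zero hpos.ne'
  -- then tangentSet s H is empty
  have hempty : tangentSet s H = ∅ := by
    ext θ₁
    simp only [Set.mem_empty_iff_false, iff_false]
    intro hθ₁
    have h12 : s θ₁ > s θ₂ := hθ₁ θ₂ (hsub hθ₂)
    have h21 : s θ₂ > s θ₁ := hθ₂ θ₁ (tangent_subset_compl s H hθ₁)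
    exact absurd h12 (not_lt.mpr h21.le)
  unfold ev
  rw [hempty]
  simpa using hc1
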